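/- Fix integers Δ ≥ 1, q, and s with Δ < s < q. Suppose a probability distribution (r_k)_{k=1}^{Δ} on {1,…,Δ} is realized as the law of |L_U| for a grand coupling, meaning: there is a probability space with a random set L_U ⊆ [q] of size at most Δ such that L_U ∩ ([q]∖S) ≠ ∅ always holds (where S ⊆ [q] has |S| = s), and for every j-element subset C of S with 1 ≤ j ≤ Δ, conditionally the event 'output lies in [q]∖S' has probability exactly (q−s)/(q−j) and is implied by 'L_U ∩ S ⊆ C'. Then for every 1 ≤ j ≤ Δ: Σ_{k=1}^{Δ} r_k · (j choose (k−1))/(s choose (k−1)) ≤ (q−s)/(q−j). -/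

import Mathlib

open MeasureTheory

lemma choose_ratio_mono (s j : ℕ) (hjs : j ≤ s) : ∀ m n : ℕ, m ≤ n →
    j.choose n * s.choose m ≤ j.choose m * s.choose n := by
  intro m n hmn
  induction n, hmn using Nat.le_induction with
  | base => exact le_rfl
  | succ n hmn ih =>
    have h1 : j.choose (n+1) * s.choose m * (n+1) = j.choose n * s.choose m * (j - n) := by
      rw [mul_right_comm, Nat.choose_succ_right_eq, mul_right_comm]
    have h2 : j.choose m * s.choose (n+1) * (n+1) = j.choose m * s.choose n * (s - n) := by
      rw [mul_assoc, Nat.choose_succ_right_eq, ← mul_assoc]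
    refine Nat.le_of_mul_le_mul_right ?_ (Nat.succ_pos n)
    rw [h1, h2]
    exact Nat.mul_le_mul ih (Nat.sub_le_sub_right hjs n)

lemma count_supersets (S M : Finset ℕ) (j : ℕ) (hMS : M ⊆ S) (hmj : M.card ≤ j) :
    ((S.powersetCard j).filter (fun C => M ⊆ C)).card
      = (S.card - M.card).choose (j - M.card) := by
  rw [← Finset.card_sdiff_of_subset hMS, ← Finset.card_powersetCard]
  apply Finset.card_bij' (fun C _ => C \ M) (fun D _ => D ∪ M)
  · intro C hC
    simp only [Finset.mem_filter, Finset.mem_powersetCard] at hC ⊢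
    obtain ⟨⟨hCS, hCj⟩, hMC⟩ := hC
    refine ⟨fun x hx => ?_, ?_⟩
    · simp only [Finset.mem_sdiff] at hx ⊢
      exact ⟨hCS hx.1, hx.2⟩
    · rw [Finset.card_sdiff_of_subset hMC, hCj]
  · intro D hD
    simp only [Finset.mem_filter, Finset.mem_powersetCard] at hD ⊢
    obtain ⟨hDS, hDcard⟩ := hD
    have hdisj : Disjoint D M := by
      refine Finset.disjoint_left.2 fun x hxD hxM => ?_
      exact (Finset.mem_sdiff.1 (hDS hxD)).2 hxM
    refine ⟨⟨Finset.union_subset (fun x hx => (Finset.mem_sdiff.1 (hDS hx)).1) hMS, ?_⟩,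
      Finset.subset_union_right⟩
    rw [Finset.card_union_of_disjoint hdisj, hDcard]
    omega
  · intro C hC
    simp only [Finset.mem_filter] at hC
    exact Finset.sdiff_union_of_subset hC.2
  · intro D hD
    simp only [Finset.mem_powersetCard] at hD
    refine Finset.union_sdiff_cancel_right ?_
    refine Finset.disjoint_left.2 fun x hxD hxM => ?_
    exact (Finset.mem_sdiff.1 (hD.1 hxD)).2 hxM

/-- Necessity direction of the LP characterization of grand couplings.
`L` is a random subset of `[q]` of size at most `Δ`, always meeting `[q] ∖ S`
(`S ⊆ [q]`, `|S| = s`), `r k = Pr[|L| = k]`, and for every `j`-subset `C` of `S`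
(`1 ≤ j ≤ Δ`) there is an event of probability exactly `(q−s)/(q−j)` implied by
`L ∩ S ⊆ C`. Then the linear constraints hold for all `1 ≤ j ≤ Δ`. -/
theorem stmt_4 {Ω : Type*} [MeasurableSpace Ω] (μ : Measure Ω) [IsProbabilityMeasure μ]
    (q s Δ : ℕ) (hΔ : 1 ≤ Δ) (hΔs : Δ < s) (hsq : s < q)
    (S : Finset ℕ) (hSq : S ⊆ Finset.Icc 1 q) (hScard : S.card = s)
    (L : Ω → Finset ℕ) (hLq : ∀ ω, L ω ⊆ Finset.Icc 1 q)
    (hLmeas : ∀ T : Finset ℕ, MeasurableSet {ω | L ω = T})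
    (hLΔ : ∀ ω, (L ω).card ≤ Δ)
    (hLout : ∀ ω, ¬ (L ω ⊆ S))
    (r : ℕ → ℝ) (hr : ∀ k, r k = (μ {ω | (L ω).card = k}).toReal)
    (hmarg : ∀ j, 1 ≤ j → j ≤ Δ → ∀ C ⊆ S, C.card = j →
      ∃ E : Set Ω, MeasurableSet E ∧ (μ E).toReal = ((q : ℝ) - s) / ((q : ℝ) - j) ∧
        {ω | L ω ∩ S ⊆ C} ⊆ E) :
    ∀ j, 1 ≤ j → j ≤ Δ →
      ∑ k ∈ Finset.Icc 1 Δ,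
          r k * (Nat.choose j (k - 1) : ℝ) / (Nat.choose s (k - 1) : ℝ)
        ≤ ((q : ℝ) - s) / ((q : ℝ) - j) := by
  intro j hj1 hjΔ
  classical
  set P : Finset (Finset ℕ) := (Finset.Icc 1 q).powerset with hP
  set p : Finset ℕ → ℝ := fun T => (μ {ω | L ω = T}).toReal with hpdef
  have hp0 : ∀ T, 0 ≤ p T := fun T => ENNReal.toReal_nonneg
  -- decomposition lemma
  have hkey : ∀ (Q : Finset ℕ → Prop) (_ : DecidablePred Q),
      (μ {ω | Q (L ω)}).toReal = ∑ T ∈ P.filter Q, p T := by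
    intro Q hQ
    have hset : {ω | Q (L ω)} = ⋃ T ∈ P.filter Q, {ω | L ω = T} := by
      ext ω
      simp only [Set.mem_setOf_eq, Set.mem_iUnion, Finset.mem_filter, Finset.mem_powerset, hP]
      constructor
      · intro h
        exact ⟨L ω, ⟨⟨hLq ω, h⟩, rfl⟩⟩
      · rintro ⟨T, ⟨⟨-, hQT⟩, hLT⟩⟩
        rwa [hLT]
    rw [hset, measure_biUnion_finset ?_ (fun T _ => hLmeas T)]
    · exact ENNReal.toReal_sum (fun T _ => measure_ne_top μ _)
    · intro T _ T' _ hTT'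
      refine Set.disjoint_left.2 fun ω h1 h2 => hTT' ?_
      rw [← h1, ← h2]
  -- pointwise support fact
  have hsupp : ∀ T, p T ≠ 0 → ∃ ω, L ω = T := by
    intro T hT
    by_contra h
    push_neg at h
    apply hT
    have : {ω | L ω = T} = ∅ := Set.eq_empty_iff_forall_notMem.2 fun ω hω => h ω hω
    simp [hpdef, this]
  -- positivity of casts
  have hq0 : (0:ℝ) < (q:ℝ) - j := by
    have hlt : j < q := by omega
    have := (Nat.cast_lt (α := ℝ)).2 hlt
    linarith
  have hqs0 : (0:ℝ) ≤ (q:ℝ) - s := by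
    have := (Nat.cast_lt (α := ℝ)).2 hsq
    linarith
  have hrhs0 : (0:ℝ) ≤ ((q:ℝ) - s) / ((q:ℝ) - j) := div_nonneg hqs0 hq0.le
  have hjs : j ≤ s := by omega
  have hcsj : (0:ℝ) < (s.choose j : ℝ) := by exact_mod_cast Nat.choose_pos hjs
  -- the family of j-subsets of S
  set F : Finset (Finset ℕ) := S.powersetCard j with hF
  have hFcard : F.card = s.choose j := by rw [hF, Finset.card_powersetCard, hScard]
  -- per-C bound
  have hCbound : ∀ C ∈ F, ∑ T ∈ P.filter (fun T => T ∩ S ⊆ C), p T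
      ≤ ((q:ℝ) - s) / ((q:ℝ) - j) := by
    intro C hC
    rw [Finset.mem_powersetCard] at hC
    obtain ⟨E, hEm, hEval, hEsub⟩ := hmarg j hj1 hjΔ C hC.1 hC.2
    rw [← hkey (fun T => T ∩ S ⊆ C) inferInstance, ← hEval]
    exact ENNReal.toReal_mono (measure_ne_top μ E) (measure_mono hEsub)
  set g : Finset ℕ → ℝ := fun T =>
    p T * (Nat.choose j (T.card - 1) : ℝ) / (Nat.choose s (T.card - 1) : ℝ) with hg
  set cnt : Finset ℕ → ℕ := fun T => (F.filter (fun C => T ∩ S ⊆ C)).card with hcnt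
  -- rewrite LHS
  have hLHS : ∑ k ∈ Finset.Icc 1 Δ,
      r k * (Nat.choose j (k - 1) : ℝ) / (Nat.choose s (k - 1) : ℝ)
      = ∑ T ∈ P, (if T.card ∈ Finset.Icc 1 Δ then g T else 0) := by
    calc ∑ k ∈ Finset.Icc 1 Δ,
        r k * (Nat.choose j (k - 1) : ℝ) / (Nat.choose s (k - 1) : ℝ)
        = ∑ k ∈ Finset.Icc 1 Δ, ∑ T ∈ P, (if T.card = k then g T else 0) := by
          refine Finset.sum_congr rfl fun k hk => ?_
          rw [hr k, hkey (fun T => T.card = k) inferInstance, Finset.sum_mul, Finset.sum_div,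
            Finset.sum_filter]
          refine Finset.sum_congr rfl fun T _ => ?_
          split
          · next h => rw [hg]; simp only [h]
          · simp
      _ = ∑ T ∈ P, ∑ k ∈ Finset.Icc 1 Δ, (if T.card = k then g T else 0) := Finset.sum_comm
      _ = ∑ T ∈ P, (if T.card ∈ Finset.Icc 1 Δ then g T else 0) := by
          refine Finset.sum_congr rfl fun T _ => ?_
          exact Finset.sum_ite_eq (Finset.Icc 1 Δ) T.card (fun _ => g T)
  -- per-T bound
  have hperT : ∀ T ∈ P, (if T.card ∈ Finset.Icc 1 Δ then g T else 0)
      ≤ p T * ((cnt T : ℝ)) / (s.choose j : ℝ) := by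
    intro T _
    by_cases hpT : p T = 0
    · have hgz : g T = 0 := by rw [hg]; simp [hpT]
      have : p T * ((cnt T : ℝ)) / (s.choose j : ℝ) = 0 := by simp [hpT]
      rw [this]
      split
      · rw [hgz]
      · exact le_rfl
    · obtain ⟨ω, hω⟩ := hsupp T hpT
      have hTS : ¬ T ⊆ S := hω ▸ hLout ω
      have hTΔ : T.card ≤ Δ := hω ▸ hLΔ ω
      obtain ⟨x, hxT, hxS⟩ := Finset.not_subset.1 hTS
      have hT1 : 1 ≤ T.card := Finset.card_pos.2 ⟨x, hxT⟩
      rw [if_pos (Finset.mem_Icc.2 ⟨hT1, hTΔ⟩)]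
      have hmk : (T ∩ S).card < T.card := by
        refine Finset.card_lt_card ⟨Finset.inter_subset_left, fun h => hxS ?_⟩
        exact (Finset.mem_inter.1 (h hxT)).2
      set m := (T ∩ S).card with hm
      have hkd : (0:ℝ) < (s.choose (T.card - 1) : ℝ) := by
        have : T.card - 1 ≤ s := by omega
        exact_mod_cast Nat.choose_pos this
      by_cases hmj : m ≤ j
      · have hcount : cnt T = (s - m).choose (j - m) := by
          have h := count_supersets S (T ∩ S) j Finset.inter_subset_right hmj
          rw [hScard] at h
          simp only [hcnt, hF, hm]
          exact h
        have hid : s.choose j * j.choose m = s.choose m * (s - m).choose (j - m) :=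
          Nat.choose_mul (n := s) hmj
        have hmono : j.choose (T.card - 1) * s.choose m ≤ j.choose m * s.choose (T.card - 1) :=
          choose_ratio_mono s j hjs m (T.card - 1) (by omega)
        have hnat : j.choose (T.card - 1) * s.choose j
            ≤ (s - m).choose (j - m) * s.choose (T.card - 1) := by
          have hsm : 0 < s.choose m := Nat.choose_pos (by omega)
          refine Nat.le_of_mul_le_mul_right ?_ hsm
          calc j.choose (T.card - 1) * s.choose j * s.choose m
              = (j.choose (T.card - 1) * s.choose m) * s.choose j := by ring
            _ ≤ (j.choose m * s.choose (T.card - 1)) * s.choose j :=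
                Nat.mul_le_mul_right _ hmono
            _ = (s.choose j * j.choose m) * s.choose (T.card - 1) := by ring
            _ = (s.choose m * (s - m).choose (j - m)) * s.choose (T.card - 1) := by rw [hid]
            _ = (s - m).choose (j - m) * s.choose (T.card - 1) * s.choose m := by ring
        have hreal : (j.choose (T.card - 1) : ℝ) / (s.choose (T.card - 1) : ℝ)
            ≤ ((s - m).choose (j - m) : ℝ) / (s.choose j : ℝ) := by
          rw [div_le_div_iff₀ hkd hcsj]
          exact_mod_cast hnat
        rw [hg, hcount]
        have hple : 0 ≤ p T := hp0 T
        calc p T * (j.choose (T.card - 1) : ℝ) / (s.choose (T.card - 1) : ℝ)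
            = p T * ((j.choose (T.card - 1) : ℝ) / (s.choose (T.card - 1) : ℝ)) := by ring
          _ ≤ p T * (((s - m).choose (j - m) : ℝ) / (s.choose j : ℝ)) :=
              mul_le_mul_of_nonneg_left hreal hple
          _ = p T * ((s - m).choose (j - m) : ℝ) / (s.choose j : ℝ) := by ring
      · have hz : j.choose (T.card - 1) = 0 := Nat.choose_eq_zero_of_lt (by omega)
        rw [hg]
        simp only [hz, Nat.cast_zero, mul_zero, zero_div]
        positivity
  -- double counting
  have hsum2 : ∑ T ∈ P, p T * ((cnt T : ℝ)) / (s.choose j : ℝ)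
      ≤ ((q:ℝ) - s) / ((q:ℝ) - j) := by
    have hswap : ∑ T ∈ P, p T * ((cnt T : ℝ))
        = ∑ C ∈ F, ∑ T ∈ P.filter (fun T => T ∩ S ⊆ C), p T := by
      calc ∑ T ∈ P, p T * ((cnt T : ℝ))
          = ∑ T ∈ P, ∑ C ∈ F, (if T ∩ S ⊆ C then p T else 0) := by
            refine Finset.sum_congr rfl fun T _ => ?_
            rw [← Finset.sum_filter, Finset.sum_const, nsmul_eq_mul, hcnt, mul_comm]
        _ = ∑ C ∈ F, ∑ T ∈ P, (if T ∩ S ⊆ C then p T else 0) := Finset.sum_comm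
        _ = ∑ C ∈ F, ∑ T ∈ P.filter (fun T => T ∩ S ⊆ C), p T := by
            refine Finset.sum_congr rfl fun C _ => (Finset.sum_filter _ _).symm
    rw [← Finset.sum_div, hswap, div_le_iff₀ hcsj]
    calc ∑ C ∈ F, ∑ T ∈ P.filter (fun T => T ∩ S ⊆ C), p T
        ≤ ∑ C ∈ F, ((q:ℝ) - s) / ((q:ℝ) - j) := Finset.sum_le_sum hCbound
      _ = (F.card : ℝ) * (((q:ℝ) - s) / ((q:ℝ) - j)) := by
          rw [Finset.sum_const, nsmul_eq_mul]
      _ = ((q:ℝ) - s) / ((q:ℝ) - j) * (s.choose j : ℝ) := by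
          rw [hFcard]; ring
  rw [hLHS]
  exact le_trans (Finset.sum_le_sum hperT) hsum2
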